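/- arXiv:2103.02062 — 2 statements merged into one kernel-verified Lean document; each statement's English description precedes it below -/
import Mathlib

section
/- Let p ≥ 2 be an integer, p̄ = ⌊p/2⌋, and δ > 0. Define f : ℝ^p → ℝ by f(θ) = (1/(2p̄)) [ (δ/2 − (δ/2)θ_1)² + ∑_{i=2}^{p̄} ((δ/2)θ_{i−1} − (δ/2)θ_i)² + p̄ · (δ/2 − (δ/2)θ_{p̄+1} − ⋯ − (δ/2)θ_p)² ]. Then for every θ ∈ ℝ^p with θ_{p̄} = 0, ‖∇f(θ)‖ ≥ δ² / (4 p̄^{5/2}). -/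
set_option maxHeartbeats 2000000

theorem telesc_aux (G : ℕ → ℝ) (m : ℕ) :
    ∑ i ∈ (Finset.Icc 2 m).attach, (G (i.1 - 2) - G (i.1 - 1)) = G 0 - G (m - 1) := by
  rcases Nat.lt_or_ge m 1 with hm | hm
  · interval_cases m
    rw [Finset.Icc_eq_empty (by omega)]
    simp
  rw [Finset.sum_attach (Finset.Icc 2 m) (fun k => G (k - 2) - G (k - 1))]
  rw [← Finset.Ico_add_one_right_eq_Icc, Finset.sum_Ico_eq_sum_range]
  have h2 : m + 1 - 2 = m - 1 := by omega
  rw [h2]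
  have h1 : ∀ i, G (2 + i - 2) - G (2 + i - 1) = G i - G (i + 1) := by
    intro i; congr 2 <;> omega
  rw [Finset.sum_congr rfl (fun i _ => h1 i)]
  exact Finset.sum_range_sub' G (m - 1)

theorem scalar_aux (b t s d : ℝ) (hb : b ≠ 0) :
    1 / (2 * b) * (((2:ℕ):ℝ) * (d / 2 - d / 2 * t) ^ (2 - 1) * -(d / 2 * 1) +
        -d * (d / 2 * t - 0) + b * (((2:ℕ):ℝ) * (d / 2 - s) ^ (2 - 1) * -0)) =
      -(d ^ 2 / (4 * b)) := by
  norm_num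
  field_simp
  ring



/-- Lower bound on the gradient norm of the total loss
`f(θ) = (1/(2p̄)) [ (δ/2 − (δ/2)θ₁)² + ∑_{i=2}^{p̄} ((δ/2)θ_{i−1} − (δ/2)θ_i)²
        + p̄ (δ/2 − (δ/2)θ_{p̄+1} − ⋯ − (δ/2)θ_p)² ]`
at any point whose `p̄`-th coordinate vanishes (1-indexed; `p̄ = ⌊p/2⌋`). -/
theorem grad_lower_bound_f
    {p : ℕ} (hp : 2 ≤ p) (pbar : ℕ) (hpbar : pbar = p / 2)
    (δ : ℝ) (hδ : 0 < δ)
    (f : EuclideanSpace ℝ (Fin p) → ℝ)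
    (hf : ∀ θ : EuclideanSpace ℝ (Fin p),
        f θ = (1 / (2 * (pbar : ℝ))) *
          ((δ / 2 - δ / 2 * θ ⟨0, by omega⟩) ^ 2 +
            (∑ i ∈ (Finset.Icc 2 pbar).attach,
              (δ / 2 * θ ⟨i.1 - 2, by have := (Finset.mem_Icc.mp i.2).2; omega⟩
                - δ / 2 * θ ⟨i.1 - 1, by have := (Finset.mem_Icc.mp i.2).2; omega⟩) ^ 2) +
            (pbar : ℝ) *
              (δ / 2 - ∑ i ∈ (Finset.Icc (pbar + 1) p).attach,
                δ / 2 * θ ⟨i.1 - 1, by have h1 := (Finset.mem_Icc.mp i.2).2; have h2 := (Finset.mem_Icc.mp i.2).1; omega⟩) ^ 2)) :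
    ∀ θ : EuclideanSpace ℝ (Fin p), θ ⟨pbar - 1, by omega⟩ = 0 →
      ‖gradient f θ‖ ≥ δ ^ 2 / (4 * (pbar : ℝ) ^ ((5 : ℝ) / 2)) := by
  intro θ hθ
  have hpb1 : 1 ≤ pbar := by omega
  have hpbp : pbar ≤ p := by omega
  have hpbpos : (0 : ℝ) < (pbar : ℝ) := by exact_mod_cast hpb1
  -- the test direction
  set v : EuclideanSpace ℝ (Fin p) := (WithLp.equiv 2 (Fin p → ℝ)).symm
      (fun j => if (j : ℕ) < pbar then ((j : ℕ) + 1 : ℝ) else 0) with hv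
  have hvco : ∀ (k : ℕ) (h : k < p), v ⟨k, h⟩ = if k < pbar then ((k : ℝ) + 1) else 0 := by
    intro k h; rw [hv]; rfl
  -- index helpers
  have hmem2 : ∀ i : {x // x ∈ Finset.Icc 2 pbar}, 2 ≤ i.1 ∧ i.1 ≤ pbar := by
    intro i; exact Finset.mem_Icc.mp i.2
  have hmem3 : ∀ i : {x // x ∈ Finset.Icc (pbar + 1) p}, pbar + 1 ≤ i.1 ∧ i.1 ≤ p := by
    intro i; exact Finset.mem_Icc.mp i.2
  -- Frechet derivative of f at θ
  have hA := ((((PiLp.hasFDerivAt_apply (𝕜 := ℝ) 2 θ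
      (⟨0, by omega⟩ : Fin p)).const_mul (δ/2)).const_sub (δ/2)))
  have hA2 := (hasDerivAt_pow 2 (δ/2 - δ/2 * θ ⟨0, by omega⟩)).comp_hasFDerivAt θ hA
  have hB2 : ∀ i ∈ (Finset.Icc 2 pbar).attach,
      HasFDerivAt (fun θ : EuclideanSpace ℝ (Fin p) =>
          (δ / 2 * θ ⟨i.1 - 2, by have := (hmem2 i).2; omega⟩
            - δ / 2 * θ ⟨i.1 - 1, by have := (hmem2 i).2; omega⟩) ^ 2)
        ((2 * (δ / 2 * θ ⟨i.1 - 2, by have := (hmem2 i).2; omega⟩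
            - δ / 2 * θ ⟨i.1 - 1, by have := (hmem2 i).2; omega⟩) ^ 1) •
          ((δ/2) • PiLp.proj (𝕜 := ℝ) 2 (fun _ : Fin p => ℝ) ⟨i.1 - 2, by have := (hmem2 i).2; omega⟩
            - (δ/2) • PiLp.proj (𝕜 := ℝ) 2 (fun _ : Fin p => ℝ) ⟨i.1 - 1, by have := (hmem2 i).2; omega⟩)) θ := by
    intro i _
    have h1 := ((PiLp.hasFDerivAt_apply (𝕜 := ℝ) 2 θ
        (⟨i.1 - 2, by have := (hmem2 i).2; omega⟩ : Fin p)).const_mul (δ/2)).sub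
      ((PiLp.hasFDerivAt_apply (𝕜 := ℝ) 2 θ
        (⟨i.1 - 1, by have := (hmem2 i).2; omega⟩ : Fin p)).const_mul (δ/2))
    exact (hasDerivAt_pow 2 _).comp_hasFDerivAt θ h1
  have hB := HasFDerivAt.fun_sum hB2
  have hC1 : ∀ i ∈ (Finset.Icc (pbar + 1) p).attach,
      HasFDerivAt (fun θ : EuclideanSpace ℝ (Fin p) => δ / 2 * θ ⟨i.1 - 1, by have := (hmem3 i); omega⟩)
        ((δ/2) • PiLp.proj (𝕜 := ℝ) 2 (fun _ : Fin p => ℝ) ⟨i.1 - 1, by have := (hmem3 i); omega⟩) θ := by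
    intro i _
    exact (PiLp.hasFDerivAt_apply (𝕜 := ℝ) 2 θ _).const_mul (δ/2)
  have hC2 := ((HasFDerivAt.fun_sum hC1).const_sub (δ/2))
  have hC3 := (hasDerivAt_pow 2 _).comp_hasFDerivAt θ hC2
  have hC := hC3.const_mul (pbar : ℝ)
  have hABC := ((hA2.add hB).add hC).const_mul (1 / (2 * (pbar : ℝ)))
  have hL := hABC.congr_of_eventuallyEq (Filter.Eventually.of_forall fun x => hf x)
  -- gradient identification
  have hgrad := (hasFDerivAt_iff_hasGradientAt.mp hL).gradient
  have key : (inner ℝ (gradient f θ) v : ℝ) = -(δ^2 / (4 * (pbar:ℝ))) := by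
    rw [hgrad, InnerProductSpace.toDual_symm_apply]
    simp only [ContinuousLinearMap.smul_apply, ContinuousLinearMap.add_apply,
      ContinuousLinearMap.coe_sum', Finset.sum_apply, ContinuousLinearMap.sub_apply,
      ContinuousLinearMap.neg_apply, PiLp.proj_apply, smul_eq_mul, pow_one]
    -- auxiliary coordinate values of v
    have hv0 : v ⟨0, by omega⟩ = 1 := by
      rw [hvco 0 (by omega), if_pos (by omega : (0:ℕ) < pbar)]; norm_num
    have hvzero : ∑ x ∈ (Finset.Icc (pbar + 1) p).attach,
        δ / 2 * v ⟨x.1 - 1, by have := hmem3 x; omega⟩ = 0 := by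
      apply Finset.sum_eq_zero
      intro x _
      rw [hvco (x.1 - 1) (by have := hmem3 x; omega),
        if_neg (by have := (hmem3 x).1; omega)]
      ring
    set G : ℕ → ℝ := fun k => if h : k < p then δ / 2 * θ ⟨k, h⟩ else 0 with hG
    have hmid : ∀ x ∈ (Finset.Icc 2 pbar).attach,
        2 * (δ / 2 * θ ⟨x.1 - 2, by have := (hmem2 x).2; omega⟩
              - δ / 2 * θ ⟨x.1 - 1, by have := (hmem2 x).2; omega⟩) *
          (δ / 2 * v ⟨x.1 - 2, by have := (hmem2 x).2; omega⟩
              - δ / 2 * v ⟨x.1 - 1, by have := (hmem2 x).2; omega⟩)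
        = (-δ) * (G (x.1 - 2) - G (x.1 - 1)) := by
      intro x _
      have h2 := (hmem2 x).1
      have h3 := (hmem2 x).2
      have hva : v ⟨x.1 - 2, by omega⟩ = ((x.1 - 1 : ℕ) : ℝ) := by
        rw [hvco (x.1 - 2) (by omega), if_pos (by omega)]
        norm_cast
        omega
      have hvb : v ⟨x.1 - 1, by omega⟩ = ((x.1 - 1 : ℕ) : ℝ) + 1 := by
        rw [hvco (x.1 - 1) (by omega), if_pos (by omega)]
      have hGa : G (x.1 - 2) = δ / 2 * θ ⟨x.1 - 2, by omega⟩ := by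
        simp only [hG]; exact dif_pos (by omega)
      have hGb : G (x.1 - 1) = δ / 2 * θ ⟨x.1 - 1, by omega⟩ := by
        simp only [hG]; exact dif_pos (by omega)
      rw [hva, hvb, hGa, hGb]
      ring
    rw [Finset.sum_congr rfl hmid, ← Finset.mul_sum, telesc_aux G pbar, hvzero, hv0]
    have hG0 : G 0 = δ / 2 * θ ⟨0, by omega⟩ := by simp only [hG]; exact dif_pos (by omega)
    have hGp : G (pbar - 1) = 0 := by
      simp only [hG]
      rw [dif_pos (by omega : pbar - 1 < p), hθ]
      ring
    rw [hG0, hGp]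
    have hne : (pbar : ℝ) ≠ 0 := ne_of_gt hpbpos
    exact scalar_aux _ _ _ _ hne
  -- norm bound on v
  have hnv : ‖v‖ ≤ (pbar : ℝ) ^ ((3 : ℝ) / 2) := by
    have hsum : ∑ j : Fin p, ‖v j‖ ^ 2 ≤ ((pbar : ℝ)) ^ 3 := by
      have e1 : ∑ j : Fin p, ‖v j‖ ^ 2
          = ∑ j : Fin p, (fun k : ℕ => if k < pbar then ((k : ℝ) + 1) ^ 2 else 0) j.1 := by
        apply Finset.sum_congr rfl
        intro j _
        have := hvco j.1 j.2
        rw [show v j = if (j : ℕ) < pbar then ((j : ℕ) : ℝ) + 1 else 0 from this]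
        by_cases h : (j : ℕ) < pbar
        · rw [if_pos h]; simp [if_pos h, Real.norm_eq_abs, sq_abs]
        · rw [if_neg h]; simp [if_neg h]
      rw [e1, Fin.sum_univ_eq_sum_range (fun k : ℕ => if k < pbar then ((k : ℝ) + 1) ^ 2 else 0) p]
      have e2 : ∑ k ∈ Finset.range pbar, (if k < pbar then ((k : ℝ) + 1) ^ 2 else 0)
          = ∑ k ∈ Finset.range p, (if k < pbar then ((k : ℝ) + 1) ^ 2 else 0) := by
        apply Finset.sum_subset (Finset.range_subset_range.mpr hpbp)
        intro x _ hx
        rw [if_neg (by simpa using hx)]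
      rw [← e2]
      have e3 : ∑ k ∈ Finset.range pbar, (if k < pbar then ((k : ℝ) + 1) ^ 2 else 0)
          = ∑ k ∈ Finset.range pbar, ((k : ℝ) + 1) ^ 2 := by
        apply Finset.sum_congr rfl
        intro k hk
        rw [if_pos (Finset.mem_range.mp hk)]
      rw [e3]
      calc ∑ k ∈ Finset.range pbar, ((k : ℝ) + 1) ^ 2
          ≤ ∑ _k ∈ Finset.range pbar, ((pbar : ℝ)) ^ 2 := by
            apply Finset.sum_le_sum
            intro k hk
            have hk' : (k : ℝ) + 1 ≤ (pbar : ℝ) := by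
              have := Finset.mem_range.mp hk
              exact_mod_cast Nat.succ_le_of_lt this
            exact pow_le_pow_left₀ (by positivity) hk' 2
        _ = ((pbar : ℝ)) ^ 3 := by
            rw [Finset.sum_const, Finset.card_range, nsmul_eq_mul]
            ring
    rw [EuclideanSpace.norm_eq]
    have := Real.sqrt_le_sqrt hsum
    refine le_trans this (le_of_eq ?_)
    rw [Real.sqrt_eq_rpow, ← Real.rpow_natCast ((pbar : ℝ)) 3,
      ← Real.rpow_mul (by positivity)]
    norm_num
  -- assemble
  have habs : |(inner ℝ (gradient f θ) v : ℝ)| = δ ^ 2 / (4 * (pbar : ℝ)) := by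
    rw [key, abs_neg, abs_of_nonneg (by positivity)]
  have h1 : δ ^ 2 / (4 * (pbar : ℝ)) ≤ ‖gradient f θ‖ * ‖v‖ :=
    habs ▸ abs_real_inner_le_norm _ _
  have h2 : ‖gradient f θ‖ * ‖v‖ ≤ ‖gradient f θ‖ * (pbar : ℝ) ^ ((3 : ℝ) / 2) :=
    mul_le_mul_of_nonneg_left hnv (norm_nonneg _)
  have hrp : (0 : ℝ) < (pbar : ℝ) ^ ((3 : ℝ) / 2) := Real.rpow_pos_of_pos hpbpos _
  have h3 : δ ^ 2 / (4 * (pbar : ℝ)) ≤ ‖gradient f θ‖ * (pbar : ℝ) ^ ((3 : ℝ) / 2) :=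
    le_trans h1 h2
  have h4 : δ ^ 2 / (4 * (pbar : ℝ)) / ((pbar : ℝ) ^ ((3 : ℝ) / 2)) ≤ ‖gradient f θ‖ :=
    (div_le_iff₀ hrp).mpr h3
  have hsplit : (pbar : ℝ) ^ ((5 : ℝ) / 2) = (pbar : ℝ) * (pbar : ℝ) ^ ((3 : ℝ) / 2) := by
    rw [show (5 : ℝ) / 2 = 1 + 3 / 2 by norm_num, Real.rpow_add hpbpos, Real.rpow_one]
  have h5 : δ ^ 2 / (4 * (pbar : ℝ)) / ((pbar : ℝ) ^ ((3 : ℝ) / 2))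
      = δ ^ 2 / (4 * (pbar : ℝ) ^ ((5 : ℝ) / 2)) := by
    rw [div_div]
    congr 1
    rw [hsplit]
    ring
  rw [ge_iff_le, ← h5]
  exact h4
end

section
/- Let (Ω, F, P) be a probability space with a filtration (F_j)_{j≥0}, let p̄ ≥ 1 be a real number, and let q^{(0)}, …, q^{(t−1)} be {0,1}-valued random variables such that q^{(j)} is F_{j+1}-measurable and P[q^{(j)} = 1 | F_j] ≤ 1/p̄ almost surely for every j. Then P[ ∑_{j=0}^{t−1} q^{(j)} ≥ p̄ ] ≤ exp( (e−1)t/p̄ − p̄ ). Consequently, for every ω ∈ (0,1), if t ≤ (p̄² + p̄ log ω)/(e−1) then P[ ∑_{j=0}^{t−1} q^{(j)} ≥ p̄ ] ≤ ω. -/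
open MeasureTheory

/-- Chernoff tail bound: under the same assumptions as the MGF bound,
`P[∑_{j<t} q⁽ʲ⁾ ≥ p̄] ≤ exp((e−1)t/p̄ − p̄)`; consequently for `ω₀ ∈ (0,1)`,
if `t ≤ (p̄² + p̄ log ω₀)/(e−1)` then this probability is at most `ω₀`. -/
theorem chernoff_tail_adapted_bernoulli
    {Ω : Type*} {m0 : MeasurableSpace Ω} (P : Measure Ω) [IsProbabilityMeasure P]
    (F : Filtration ℕ m0) (pbar : ℝ) (hpbar : 1 ≤ pbar) (t : ℕ)
    (q : ℕ → Ω → ℝ)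
    (h01 : ∀ j, ∀ ω, q j ω = 0 ∨ q j ω = 1)
    (hadapted : ∀ j, Measurable[F (j + 1)] (q j))
    (hcond : ∀ j < t,
      ∀ᵐ ω ∂P,
        (P[Set.indicator {ω' | q j ω' = 1} (fun _ => (1 : ℝ)) | F j]) ω ≤ 1 / pbar) :
    P {ω | pbar ≤ ∑ j ∈ Finset.range t, q j ω}
        ≤ ENNReal.ofReal (Real.exp ((Real.exp 1 - 1) * t / pbar - pbar)) ∧
    ∀ ω₀ : ℝ, 0 < ω₀ → ω₀ < 1 →
      (t : ℝ) ≤ (pbar ^ 2 + pbar * Real.log ω₀) / (Real.exp 1 - 1) →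
      P {ω | pbar ≤ ∑ j ∈ Finset.range t, q j ω} ≤ ENNReal.ofReal ω₀ := by
  have hpbar0 : (0 : ℝ) < pbar := lt_of_lt_of_le one_pos hpbar
  have he1 : (0 : ℝ) < Real.exp 1 - 1 := by
    nlinarith [Real.add_one_le_exp (1 : ℝ), Real.exp_one_gt_d9]
  -- q j is the indicator appearing in hcond
  have hq_eq_ind : ∀ j, q j = Set.indicator {ω' | q j ω' = 1} (fun _ => (1 : ℝ)) := by
    intro j; funext ω
    rcases h01 j ω with h | h
    · rw [h, Set.indicator_of_notMem]; simp [Set.mem_setOf_eq, h]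
    · rw [h, Set.indicator_of_mem]; exact h
  have hcond' : ∀ j < t, ∀ᵐ ω ∂P, (P[q j | F j]) ω ≤ 1 / pbar := by
    intro j hj; rw [hq_eq_ind j]; exact hcond j hj
  have hq0 : ∀ j ω, 0 ≤ q j ω := by
    intro j ω; rcases h01 j ω with h | h <;> simp [h]
  have hq1 : ∀ j ω, q j ω ≤ 1 := by
    intro j ω; rcases h01 j ω with h | h <;> simp [h]
  have hqmeas : ∀ j, Measurable (q j) := fun j => (hadapted j).mono (F.le (j + 1)) le_rfl
  -- S n : partial sums, X n = exp (S n)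
  set S : ℕ → Ω → ℝ := fun n ω => ∑ j ∈ Finset.range n, q j ω with hS
  set X : ℕ → Ω → ℝ := fun n ω => Real.exp (S n ω) with hX
  have hS_nonneg : ∀ n ω, 0 ≤ S n ω := fun n ω =>
    Finset.sum_nonneg fun j _ => hq0 j ω
  have hS_le : ∀ n ω, S n ω ≤ n := by
    intro n ω
    calc S n ω ≤ ∑ j ∈ Finset.range n, (1 : ℝ) :=
          Finset.sum_le_sum fun j _ => hq1 j ω
      _ = n := by simp
  have hX_nonneg : ∀ n ω, 0 ≤ X n ω := fun n ω => (Real.exp_pos _).le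
  have hX_le : ∀ n ω, X n ω ≤ Real.exp n := fun n ω => Real.exp_le_exp.mpr (hS_le n ω)
  have hSmeasF : ∀ n, Measurable[F n] (S n) := by
    intro n
    apply Finset.measurable_sum
    intro j hj
    have hj' : j + 1 ≤ n := Finset.mem_range.mp hj
    exact (hadapted j).mono (F.mono hj') le_rfl
  have hXmeasF : ∀ n, Measurable[F n] (X n) :=
    fun n => Real.measurable_exp.comp (hSmeasF n)
  have hXmeas : ∀ n, Measurable (X n) :=
    fun n => (hXmeasF n).mono (F.le n) le_rfl
  have hXint : ∀ n, Integrable (X n) P := by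
    intro n
    refine (integrable_const (Real.exp n)).mono' (hXmeas n).aestronglyMeasurable ?_
    exact Filter.Eventually.of_forall fun ω => by
      rw [Real.norm_of_nonneg (hX_nonneg n ω)]; exact hX_le n ω
  have hXqint : ∀ n, Integrable (fun ω => X n ω * q n ω) P := by
    intro n
    refine (integrable_const (Real.exp n)).mono'
      ((hXmeas n).mul (hqmeas n)).aestronglyMeasurable ?_
    refine Filter.Eventually.of_forall fun ω => ?_
    rw [Real.norm_of_nonneg (mul_nonneg (hX_nonneg n ω) (hq0 n ω))]
    calc X n ω * q n ω ≤ X n ω * 1 :=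
          mul_le_mul_of_nonneg_left (hq1 n ω) (hX_nonneg n ω)
      _ ≤ Real.exp n := by rw [mul_one]; exact hX_le n ω
  have hqint : ∀ n, Integrable (q n) P := by
    intro n
    refine (integrable_const (1 : ℝ)).mono' (hqmeas n).aestronglyMeasurable ?_
    exact Filter.Eventually.of_forall fun ω => by
      rw [Real.norm_of_nonneg (hq0 n ω)]; exact hq1 n ω
  -- the MGF induction
  have key : ∀ n ≤ t, ∫ ω, X n ω ∂P ≤ (1 + (Real.exp 1 - 1) / pbar) ^ n := by
    intro n hn
    induction n with
    | zero => simp [hX, hS]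
    | succ n ih =>
      have hn' : n ≤ t := Nat.le_of_succ_le hn
      have ihn := ih hn'
      have hnlt : n < t := hn
      -- X (n+1) = X n + (e-1) * (X n * q n)
      have hsplit : ∀ ω, X (n + 1) ω = X n ω + (Real.exp 1 - 1) * (X n ω * q n ω) := by
        intro ω
        have : X (n + 1) ω = X n ω * Real.exp (q n ω) := by
          simp only [hX, hS, Finset.sum_range_succ, Real.exp_add]
        rw [this]
        rcases h01 n ω with h | h <;> rw [h] <;> ring_nf <;> simp [Real.exp_zero]
      have hint1 : ∫ ω, X (n + 1) ω ∂P
          = ∫ ω, X n ω ∂P + (Real.exp 1 - 1) * ∫ ω, X n ω * q n ω ∂P := by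
        simp_rw [hsplit]
        rw [integral_add (hXint n) ((hXqint n).const_mul _), integral_const_mul]
      -- bound the cross term via conditional expectation
      have htrim : SigmaFinite (P.trim (F.le n)) := by infer_instance
      have hpull : P[fun ω => X n ω * q n ω | F n] =ᵐ[P]
          fun ω => X n ω * (P[q n | F n]) ω := by
        exact condExp_mul_of_stronglyMeasurable_left (hXmeasF n).stronglyMeasurable
          (hXqint n) (hqint n)
      have hcross : ∫ ω, X n ω * q n ω ∂P ≤ (1 / pbar) * ∫ ω, X n ω ∂P := by
        have h1 : ∫ ω, X n ω * q n ω ∂P = ∫ ω, (P[fun ω => X n ω * q n ω | F n]) ω ∂P :=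
          (integral_condExp (F.le n)).symm
        rw [h1]
        have h2 : ∫ ω, (P[fun ω => X n ω * q n ω | F n]) ω ∂P
            ≤ ∫ ω, X n ω * (1 / pbar) ∂P := by
          refine integral_mono_ae integrable_condExp ((hXint n).mul_const _) ?_
          filter_upwards [hpull, hcond' n hnlt] with ω h1 h2
          rw [h1]
          exact mul_le_mul_of_nonneg_left h2 (hX_nonneg n ω)
        calc ∫ ω, (P[fun ω => X n ω * q n ω | F n]) ω ∂P
            ≤ ∫ ω, X n ω * (1 / pbar) ∂P := h2
          _ = (1 / pbar) * ∫ ω, X n ω ∂P := by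
              rw [integral_mul_const]; ring
      have hXint_nonneg : 0 ≤ ∫ ω, X n ω ∂P :=
        integral_nonneg fun ω => hX_nonneg n ω
      have hbase : (0 : ℝ) ≤ 1 + (Real.exp 1 - 1) / pbar := by positivity
      calc ∫ ω, X (n + 1) ω ∂P
          = ∫ ω, X n ω ∂P + (Real.exp 1 - 1) * ∫ ω, X n ω * q n ω ∂P := hint1
        _ ≤ ∫ ω, X n ω ∂P + (Real.exp 1 - 1) * ((1 / pbar) * ∫ ω, X n ω ∂P) := by
            nlinarith [hcross]
        _ = (1 + (Real.exp 1 - 1) / pbar) * ∫ ω, X n ω ∂P := by ring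
        _ ≤ (1 + (Real.exp 1 - 1) / pbar) * (1 + (Real.exp 1 - 1) / pbar) ^ n :=
            mul_le_mul_of_nonneg_left ihn hbase
        _ = (1 + (Real.exp 1 - 1) / pbar) ^ (n + 1) := by ring
  -- conclude the MGF bound
  have hmgf : ∫ ω, X t ω ∂P ≤ Real.exp ((Real.exp 1 - 1) * t / pbar) := by
    calc ∫ ω, X t ω ∂P ≤ (1 + (Real.exp 1 - 1) / pbar) ^ t := key t le_rfl
      _ ≤ (Real.exp ((Real.exp 1 - 1) / pbar)) ^ t := by
          refine pow_le_pow_left₀ (by positivity) ?_ t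
          have := Real.add_one_le_exp ((Real.exp 1 - 1) / pbar)
          linarith
      _ = Real.exp ((Real.exp 1 - 1) * t / pbar) := by
          rw [← Real.exp_nat_mul]; ring_nf
  -- Markov
  have hset : {ω | pbar ≤ ∑ j ∈ Finset.range t, q j ω} = {ω | Real.exp pbar ≤ X t ω} := by
    ext ω; simp only [Set.mem_setOf_eq, hX, hS, Real.exp_le_exp]
  have hmarkov := mul_meas_ge_le_integral_of_nonneg
    (Filter.Eventually.of_forall fun ω => hX_nonneg t ω) (hXint t) (Real.exp pbar)
  have hfin : P {ω | pbar ≤ ∑ j ∈ Finset.range t, q j ω} ≠ ⊤ :=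
    (measure_lt_top P _).ne
  have hmain : P {ω | pbar ≤ ∑ j ∈ Finset.range t, q j ω}
      ≤ ENNReal.ofReal (Real.exp ((Real.exp 1 - 1) * t / pbar - pbar)) := by
    rw [hset]
    have htoReal : (P {ω | Real.exp pbar ≤ X t ω}).toReal
        ≤ Real.exp ((Real.exp 1 - 1) * t / pbar - pbar) := by
      have hE : (0 : ℝ) < Real.exp pbar := Real.exp_pos _
      rw [Real.exp_sub, le_div_iff₀ hE]
      calc (P {ω | Real.exp pbar ≤ X t ω}).toReal * Real.exp pbar
          = Real.exp pbar * (P {x | Real.exp pbar ≤ X t x}).toReal := by ring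
        _ ≤ ∫ ω, X t ω ∂P := hmarkov
        _ ≤ Real.exp ((Real.exp 1 - 1) * t / pbar) := hmgf
    calc P {ω | Real.exp pbar ≤ X t ω}
        = ENNReal.ofReal (P {ω | Real.exp pbar ≤ X t ω}).toReal :=
          (ENNReal.ofReal_toReal (measure_lt_top P _).ne).symm
      _ ≤ ENNReal.ofReal (Real.exp ((Real.exp 1 - 1) * t / pbar - pbar)) :=
          ENNReal.ofReal_le_ofReal htoReal
  refine ⟨hmain, ?_⟩
  intro ω₀ hω₀ hω₁ ht
  refine le_trans hmain (ENNReal.ofReal_le_ofReal ?_)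
  have h1 : (Real.exp 1 - 1) * t ≤ pbar ^ 2 + pbar * Real.log ω₀ := by
    rw [le_div_iff₀ he1] at ht
    nlinarith
  have h2 : (Real.exp 1 - 1) * t / pbar - pbar ≤ Real.log ω₀ := by
    rw [div_sub' hpbar0.ne', div_le_iff₀ hpbar0]
    nlinarith
  calc Real.exp ((Real.exp 1 - 1) * t / pbar - pbar)
      ≤ Real.exp (Real.log ω₀) := Real.exp_le_exp.mpr h2
    _ = ω₀ := Real.exp_log hω₀
end
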